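/- For μ = (μ_1, μ_2), the E-block entries of the Gauss decomposition of the super Yangian satisfy (u-v)[E_{1;i,j}(u), E_{1;h,k}(v)] = (-1)^{|h|_1|j|_2 + |j|_2|k|_2 + |h|_1|k|_2} ( E_{1;i,k}(u) - E_{1;i,k}(v) )( E_{1;h,j}(u) - E_{1;h,j}(v) ), for all 1 ≤ i,h ≤ μ_1 and 1 ≤ j,k ≤ μ_2. -/

import Mathlib

noncomputable section

namespace SuperYangian

/-- The sign `(-1)^x` for `x : ZMod 2`. -/
def sgn (x : ZMod 2) : ℂ := if x = 0 then 1 else -1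

variable {A : Type*}

/-- The supercommutator `[x, y] = x*y - ε • (y*x)` with prescribed sign `ε`
(for homogeneous `x`, `y` one takes `ε = (-1)^{|x||y|}`). -/
def scomm [Ring A] [Algebra ℂ A] (ε : ℂ) (x y : A) : A := x * y - ε • (y * x)

/-- `off μ a = μ 0 + ⋯ + μ (a-1)`. -/
def off (μ : ℕ → ℕ) (a : ℕ) : ℕ := ∑ b ∈ Finset.range a, μ b

/-- A family `t i j r` (the coefficient of `u^{-r}` in `t_{ij}(u)`, with 0-based
indices `i j < d`) satisfying the defining RTT relations of the super Yangian
`Y(gl_{M|N})` with parity sequence `p`; the super Yangian itself, via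
`t_{i+1,j+1}^{(r)} = t i j r`, is the universal such family. -/
structure RTT (A : Type*) [Ring A] [Algebra ℂ A] (d : ℕ) (p : ℕ → ZMod 2) where
  t : ℕ → ℕ → ℕ → A
  t_zero : ∀ i j, t i j 0 = if i = j then (1 : A) else 0
  rtt : ∀ i j h k r s : ℕ, i < d → j < d → h < d → k < d →
    scomm (sgn ((p i + p j) * (p h + p k))) (t i j r) (t h k s) =
      sgn (p i * p j + p i * p h + p j * p h) •
        ∑ g ∈ Finset.range (min r s),
          (t h j g * t i k (r + s - 1 - g) - t h j (r + s - 1 - g) * t i k g)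

/-- Gauss decomposition data `T(u) = F(u) D(u) E(u)` with respect to the composition
`μ = (μ 0, …, μ (n-1))`, in coefficient form.  `E a b i j r` is the coefficient of
`u^{-r}` in the `(i,j)`-entry of the block `E_{a,b}(u)` (0-based blocks and entries),
extended by the identity on the diagonal blocks and by `0` below them; similarly `F`.
`D a` are the diagonal blocks and `D' a` their inverses.  Since the Gauss
decomposition is unique, this data consists exactly of the quasideterminant blocks. -/
structure Gauss [Ring A] [Algebra ℂ A] (T : ℕ → ℕ → ℕ → A) (n : ℕ) (μ : ℕ → ℕ) where
  D : ℕ → ℕ → ℕ → ℕ → A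
  D' : ℕ → ℕ → ℕ → ℕ → A
  E : ℕ → ℕ → ℕ → ℕ → ℕ → A
  F : ℕ → ℕ → ℕ → ℕ → ℕ → A
  E_diag : ∀ a i j r, E a a i j r = if i = j ∧ r = 0 then 1 else 0
  E_low : ∀ a b i j r, b < a → E a b i j r = 0
  E_zero : ∀ a b i j, a < b → E a b i j 0 = 0
  F_diag : ∀ a i j r, F a a i j r = if i = j ∧ r = 0 then 1 else 0
  F_high : ∀ a b i j r, a < b → F a b i j r = 0
  F_zero : ∀ a b i j, b < a → F a b i j 0 = 0
  D_zero : ∀ a i j, D a i j 0 = if i = j then (1 : A) else 0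
  D_inv : ∀ a i j r, a < n → i < μ a → j < μ a →
    ∑ q ∈ Finset.range (μ a), ∑ e ∈ Finset.range (r + 1), D a i q e * D' a q j (r - e) =
      if i = j ∧ r = 0 then 1 else 0
  D_inv' : ∀ a i j r, a < n → i < μ a → j < μ a →
    ∑ q ∈ Finset.range (μ a), ∑ e ∈ Finset.range (r + 1), D' a i q e * D a q j (r - e) =
      if i = j ∧ r = 0 then 1 else 0
  decomp : ∀ a b i j r, a < n → b < n → i < μ a → j < μ b →
    T (off μ a + i) (off μ b + j) r =
      ∑ c ∈ Finset.range n, ∑ q1 ∈ Finset.range (μ c), ∑ q2 ∈ Finset.range (μ c),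
        ∑ e1 ∈ Finset.range (r + 1), ∑ e2 ∈ Finset.range (r + 1 - e1),
          F a c i q1 e1 * D c q1 q2 e2 * E c b q2 j (r - e1 - e2)

/-! ### sgn lemmas -/

set_option linter.unusedSectionVars false

lemma sgn_add (a b : ZMod 2) : sgn (a + b) = sgn a * sgn b := by
  obtain rfl | rfl : a = 0 ∨ a = 1 := (by revert a; decide) <;>
    obtain rfl | rfl : b = 0 ∨ b = 1 := (by revert b; decide) <;>
    simp [sgn, show (1:ZMod 2) + 1 = 0 from rfl, show (1:ZMod 2) ≠ 0 from by decide]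

lemma sgn_mul_self (a : ZMod 2) : sgn a * sgn a = 1 := by
  obtain rfl | rfl : a = 0 ∨ a = 1 := (by revert a; decide) <;> simp [sgn, show (1:ZMod 2) + 1 = 0 from rfl, show (1:ZMod 2) ≠ 0 from by decide]

lemma sgn_zero : sgn 0 = 1 := rfl

lemma sgn_self_mul_self (a : ZMod 2) : a * a = a := by revert a; decide

lemma z2_add_self (a : ZMod 2) : a + a = 0 := by fin_cases a <;> decide

lemma sgn_smul_smul [Ring A] [Algebra ℂ A] (a : ZMod 2) (x : A) :
    sgn a • sgn a • x = x := by rw [smul_smul, sgn_mul_self, one_smul]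

lemma sgn_smul_sgn_smul [Ring A] [Algebra ℂ A] (a b : ZMod 2) (x : A) :
    sgn a • sgn b • x = sgn (a + b) • x := by rw [smul_smul, ← sgn_add]

lemma sgn_factor (x c q k : ZMod 2) :
    sgn (x * (c + k)) = sgn (x * (c + q)) * sgn (x * (q + k)) := by
  rw [← sgn_add]
  have h : ∀ x c q k : ZMod 2, x * (c + k) = x * (c + q) + x * (q + k) := by decide
  rw [h x c q k]

lemma sgn_factor2 (x c q : ZMod 2) :
    sgn (x * (c + q)) = sgn (x * c) * sgn (x * q) := by
  rw [← sgn_add]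
  have h : ∀ x c q : ZMod 2, x * (c + q) = x * c + x * q := by decide
  rw [h x c q]

/-! ### scomm lemmas -/

section scomm
variable [Ring A] [Algebra ℂ A] (ε ε₁ ε₂ : ℂ) (x y z : A)

lemma scomm_def : scomm ε x y = x * y - ε • (y * x) := rfl

lemma scomm_mul_right :
    scomm (ε₁ * ε₂) x (y * z) = scomm ε₁ x y * z + ε₁ • (y * scomm ε₂ x z) := by
  simp only [scomm, mul_sub, sub_mul, smul_mul_assoc, mul_smul_comm, mul_assoc]
  module

lemma scomm_mul_left :
    scomm (ε₁ * ε₂) (x * y) z = x * scomm ε₁ y z + ε₁ • (scomm ε₂ x z * y) := by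
  simp only [scomm, mul_sub, sub_mul, smul_mul_assoc, mul_smul_comm, mul_assoc]
  module

lemma scomm_flip (h : ε * ε = 1) : ε • scomm ε y x = - scomm ε x y := by
  simp only [scomm, smul_sub, smul_smul, h, one_smul, neg_sub]

lemma scomm_sub_right (w : A) : scomm ε x (y - w) = scomm ε x y - scomm ε x w := by
  simp only [scomm, mul_sub, sub_mul, smul_sub]; abel

lemma scomm_zero_left : scomm ε 0 y = 0 := by simp [scomm]

lemma scomm_one_one_left : scomm 1 1 y = 0 := by simp [scomm]

lemma scomm_one_right : scomm 1 x 1 = 0 := by simp [scomm]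

lemma scomm_zero_right : scomm ε x 0 = 0 := by simp [scomm]

lemma scomm_smul_right (w : A) : scomm ε x (ε₁ • w) = ε₁ • scomm ε x w := by
  simp only [scomm, mul_smul_comm, smul_mul_assoc, smul_sub, smul_comm ε ε₁]

lemma scomm_sum_right {ι : Type*} (s : Finset ι) (f : ι → A) :
    scomm ε x (∑ i ∈ s, f i) = ∑ i ∈ s, scomm ε x (f i) := by
  simp only [scomm, Finset.mul_sum, Finset.sum_mul, ← Finset.sum_sub_distrib, Finset.smul_sum]

lemma scomm_sum_left {ι : Type*} (s : Finset ι) (f : ι → A) :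
    scomm ε (∑ i ∈ s, f i) y = ∑ i ∈ s, scomm ε (f i) y := by
  simp only [scomm, Finset.mul_sum, Finset.sum_mul, ← Finset.sum_sub_distrib, Finset.smul_sum]

end scomm

/-! ### Two-variable power series infrastructure.
`R = (A⟦x⟧)⟦y⟧`; `sx f = ∑ f r xʳ`, `sy g = ∑ g s yˢ`. -/

section series
variable [Ring A] [Algebra ℂ A]

local notation "B" => PowerSeries A
local notation "R" => PowerSeries (PowerSeries A)

open PowerSeries

def sx (f : ℕ → A) : PowerSeries (PowerSeries A) := C (mk f)

def sy (f : ℕ → A) : PowerSeries (PowerSeries A) := mk fun s => C (f s)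

def Xv : PowerSeries (PowerSeries A) := C (X : PowerSeries A)

def Yv : PowerSeries (PowerSeries A) := X

def cf (r s : ℕ) (P : PowerSeries (PowerSeries A)) : A := coeff r (coeff s P)

lemma cf_ext {P Q : PowerSeries (PowerSeries A)} (h : ∀ r s, cf r s P = cf r s Q) :
    P = Q :=
  PowerSeries.ext fun s => PowerSeries.ext fun r => h r s

lemma cf_add (r s : ℕ) (P Q : PowerSeries (PowerSeries A)) :
    cf r s (P + Q) = cf r s P + cf r s Q := by simp [cf]

lemma cf_sub (r s : ℕ) (P Q : PowerSeries (PowerSeries A)) :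
    cf r s (P - Q) = cf r s P - cf r s Q := by simp [cf]

lemma cf_neg (r s : ℕ) (P : PowerSeries (PowerSeries A)) :
    cf r s (-P) = - cf r s P := by simp [cf]

lemma cf_zero (r s : ℕ) : cf r s (0 : PowerSeries (PowerSeries A)) = 0 := by simp [cf]

lemma cf_smul (r s : ℕ) (c : ℂ) (P : PowerSeries (PowerSeries A)) :
    cf r s (c • P) = c • cf r s P := rfl

lemma cf_sum (r s : ℕ) {ι : Type*} (t : Finset ι) (f : ι → PowerSeries (PowerSeries A)) :
    cf r s (∑ i ∈ t, f i) = ∑ i ∈ t, cf r s (f i) := by simp [cf]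

lemma cf_sx_mul_sy (r s : ℕ) (f g : ℕ → A) :
    cf r s (sx f * sy g) = f r * g s := by
  simp [cf, sx, sy, coeff_C_mul, coeff_mk, coeff_mul_C]

lemma cf_sy_mul_sx (r s : ℕ) (f g : ℕ → A) :
    cf r s (sy f * sx g) = f s * g r := by
  simp [cf, sx, sy, coeff_mul_C, coeff_mk, coeff_C_mul]

lemma mk_mul_mk (f g : ℕ → A) :
    (mk f : PowerSeries A) * mk g = mk fun r => ∑ e ∈ Finset.range (r+1), f e * g (r - e) := by
  ext n
  rw [coeff_mul, coeff_mk, Finset.Nat.sum_antidiagonal_eq_sum_range_succ_mk]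
  simp [coeff_mk]

lemma sx_mul_sx (f g : ℕ → A) :
    sx f * sx g = sx fun r => ∑ e ∈ Finset.range (r+1), f e * g (r - e) := by
  rw [sx, sx, sx, ← map_mul, mk_mul_mk]

lemma sy_mul_sy (f g : ℕ → A) :
    sy f * sy g = sy fun s => ∑ e ∈ Finset.range (s+1), f e * g (s - e) := by
  unfold sy
  ext n
  rw [coeff_mul, coeff_mk, Finset.Nat.sum_antidiagonal_eq_sum_range_succ_mk]
  simp [coeff_mk, ← map_mul, map_sum]

lemma cf_sx (r s : ℕ) (f : ℕ → A) : cf r s (sx f) = if s = 0 then f r else 0 := by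
  rcases s with _ | s <;> simp [cf, sx, coeff_mk, coeff_C]

lemma cf_sy (r s : ℕ) (f : ℕ → A) : cf r s (sy f) = if r = 0 then f s else 0 := by
  rcases r with _ | r <;> simp [cf, sy, coeff_mk, coeff_C]

lemma cf_sx_mul_sx (r s : ℕ) (f g : ℕ → A) :
    cf r s (sx f * sx g) = if s = 0 then ∑ e ∈ Finset.range (r+1), f e * g (r - e) else 0 := by
  rw [sx_mul_sx, cf_sx]

lemma cf_sy_mul_sy (r s : ℕ) (f g : ℕ → A) :
    cf r s (sy f * sy g) = if r = 0 then ∑ e ∈ Finset.range (s+1), f e * g (s - e) else 0 := by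
  rw [sy_mul_sy, cf_sy]

lemma cf_Yv_mul (r s : ℕ) (P : PowerSeries (PowerSeries A)) :
    cf r (s+1) (Yv * P) = cf r s P := by
  simp [cf, Yv, coeff_succ_X_mul]

lemma cf_Yv_mul_zero (r : ℕ) (P : PowerSeries (PowerSeries A)) :
    cf r 0 (Yv * P) = 0 := by
  have : coeff 0 (Yv * P) = 0 := by simp [Yv, coeff_zero_eq_constantCoeff]
  simp [cf, this]

lemma cf_Xv_mul (r s : ℕ) (P : PowerSeries (PowerSeries A)) :
    cf (r+1) s (Xv * P) = cf r s P := by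
  simp [cf, Xv, coeff_C_mul, coeff_succ_X_mul]

lemma cf_Xv_mul_zero (s : ℕ) (P : PowerSeries (PowerSeries A)) :
    cf 0 s (Xv * P) = 0 := by
  simp [cf, Xv, coeff_C_mul, coeff_zero_eq_constantCoeff]

lemma Xv_commute (P : PowerSeries (PowerSeries A)) : Xv * P = P * Xv := by
  apply cf_ext
  intro r s
  simp only [cf, Xv, coeff_C_mul, coeff_mul_C]
  exact congrArg _ ((commute_X (coeff s P)).symm.eq)

lemma Yv_commute (P : PowerSeries (PowerSeries A)) : Yv * P = P * Yv := by
  exact ((commute_X P).eq).symm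

lemma YX_commute (P : PowerSeries (PowerSeries A)) :
    (Yv - Xv) * P = P * (Yv - Xv) := by
  rw [sub_mul, mul_sub, Xv_commute, Yv_commute]

lemma XY_pull (P Q : PowerSeries (PowerSeries A)) :
    P * (Xv * (Yv * Q)) = Xv * (Yv * (P * Q)) := by
  calc P * (Xv * (Yv * Q)) = (P * Xv) * (Yv * Q) := by rw [mul_assoc]
    _ = (Xv * P) * (Yv * Q) := by rw [Xv_commute]
    _ = Xv * ((P * Yv) * Q) := by rw [mul_assoc, mul_assoc]
    _ = Xv * ((Yv * P) * Q) := by rw [Yv_commute]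
    _ = Xv * (Yv * (P * Q)) := by rw [mul_assoc]

lemma XY_mul_right (W Z : PowerSeries (PowerSeries A)) :
    (Xv * (Yv * W)) * Z = Xv * (Yv * (W * Z)) := by
  rw [mul_assoc, mul_assoc]

end series


section seriesdefs
variable [Ring A] [Algebra ℂ A]
open PowerSeries

lemma mk_sum {ι : Type*} (t : Finset ι) (f : ι → ℕ → A) :
    (PowerSeries.mk fun r => ∑ i ∈ t, f i r) = ∑ i ∈ t, PowerSeries.mk (f i) := by
  ext n
  simp [coeff_mk]

lemma sx_sum {ι : Type*} (t : Finset ι) (f : ι → ℕ → A) :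
    (sx fun r => ∑ i ∈ t, f i r) = ∑ i ∈ t, sx (f i) := by
  unfold sx; rw [mk_sum, map_sum]

lemma sy_sum {ι : Type*} (t : Finset ι) (f : ι → ℕ → A) :
    (sy fun s => ∑ i ∈ t, f i s) = ∑ i ∈ t, sy (f i) := by
  unfold sy
  ext n
  simp [coeff_mk]

lemma sx_delta (c : Prop) [Decidable c] :
    (sx fun r => if c ∧ r = 0 then (1:A) else 0) = if c then 1 else 0 := by
  split_ifs with h
  · unfold sx
    have : (PowerSeries.mk fun r => if c ∧ r = 0 then (1:A) else 0) = 1 := by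
      ext n
      simp [coeff_mk, coeff_one, h, and_comm]
    rw [this, map_one]
  · unfold sx
    have : (PowerSeries.mk fun r => if c ∧ r = 0 then (1:A) else 0) = 0 := by
      ext n
      simp [coeff_mk, h]
    rw [this, map_zero]

lemma sy_delta (c : Prop) [Decidable c] :
    (sy fun s => if c ∧ s = 0 then (1:A) else 0) = if c then 1 else 0 := by
  split_ifs with h
  · unfold sy
    ext n
    simp [coeff_mk, coeff_one, h, and_comm, apply_ite (C (R := A))]
  · unfold sy
    ext n
    simp [coeff_mk, h]

variable {d : ℕ} {p : ℕ → ZMod 2}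

def dX {T : ℕ → ℕ → ℕ → A} {n : ℕ} {μ : ℕ → ℕ} (G : Gauss T n μ) (a b : ℕ) :
    PowerSeries (PowerSeries A) := sx (G.D 0 a b)

def dY {T : ℕ → ℕ → ℕ → A} {n : ℕ} {μ : ℕ → ℕ} (G : Gauss T n μ) (a b : ℕ) :
    PowerSeries (PowerSeries A) := sy (G.D 0 a b)

def d'X {T : ℕ → ℕ → ℕ → A} {n : ℕ} {μ : ℕ → ℕ} (G : Gauss T n μ) (a b : ℕ) :
    PowerSeries (PowerSeries A) := sx (G.D' 0 a b)

def d'Y {T : ℕ → ℕ → ℕ → A} {n : ℕ} {μ : ℕ → ℕ} (G : Gauss T n μ) (a b : ℕ) :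
    PowerSeries (PowerSeries A) := sy (G.D' 0 a b)

def eX {T : ℕ → ℕ → ℕ → A} {n : ℕ} {μ : ℕ → ℕ} (G : Gauss T n μ) (a j : ℕ) :
    PowerSeries (PowerSeries A) := sx (G.E 0 1 a j)

def eY {T : ℕ → ℕ → ℕ → A} {n : ℕ} {μ : ℕ → ℕ} (G : Gauss T n μ) (a j : ℕ) :
    PowerSeries (PowerSeries A) := sy (G.E 0 1 a j)

def uX (SS : RTT A d p) (m a j : ℕ) : PowerSeries (PowerSeries A) := sx (SS.t a (m + j))

def uY (SS : RTT A d p) (m a j : ℕ) : PowerSeries (PowerSeries A) := sy (SS.t a (m + j))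

end seriesdefs


section sumcc
variable [Ring A] [Algebra ℂ A]

lemma sumCC_zero (m' : ℕ) (CC RR : ℕ → ℕ → A)
    (hC0 : ∀ s, CC 0 s = 0) (hCm0 : CC m' 0 = 0)
    (hRsym : ∀ a b, RR a b = RR b a)
    (hrec : ∀ a b, a + b + 1 = m' → CC (a+1) b = CC a (b+1) + RR a b) :
    ∑ e ∈ Finset.range (m'+1), CC e (m' - e) = 0 := by
  have htel : ∀ e, e ≤ m' → CC e (m' - e) = ∑ a ∈ Finset.range e, RR a (m' - 1 - a) := by
    intro e
    induction e with
    | zero => intro _; simpa using hC0 m'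
    | succ e ih =>
      intro he
      have he' : e ≤ m' := by omega
      have hstep : CC (e+1) (m' - (e+1)) = CC e (m' - e) + RR e (m' - 1 - e) := by
        have h := hrec e (m' - (e+1)) (by omega)
        rw [show m' - (e+1) + 1 = m' - e by omega] at h
        rw [show m' - 1 - e = m' - (e+1) by omega]
        exact h
      rw [hstep, ih he', Finset.sum_range_succ]
  have hSρ : ∑ a ∈ Finset.range m', RR a (m' - 1 - a) = 0 := by
    have := htel m' le_rfl
    rw [Nat.sub_self, hCm0] at this
    exact this.symm
  have htri : ∀ n : ℕ, ∀ ρ : ℕ → A, (∑ e ∈ Finset.range (n+1), ∑ a ∈ Finset.range e, ρ a)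
      = ∑ a ∈ Finset.range n, (n - a) • ρ a := by
    intro n
    induction n with
    | zero => intro ρ; simp
    | succ n ih =>
      intro ρ
      rw [Finset.sum_range_succ, ih ρ, Finset.sum_range_succ (fun a => (n + 1 - a) • ρ a),
        Finset.sum_range_succ ρ, show n + 1 - n = 1 by omega, one_smul]
      rw [Finset.sum_congr rfl (fun a ha => show (n + 1 - a) • ρ a = (n - a) • ρ a + ρ a from by
        rw [show n + 1 - a = (n - a) + 1 from by
          have := Finset.mem_range.1 ha; omega, succ_nsmul])]
      rw [Finset.sum_add_distrib]
      abel
  rw [Finset.sum_congr rfl (fun e he => htel e (Nat.lt_succ_iff.mp (Finset.mem_range.1 he))),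
    htri m' (fun a => RR a (m' - 1 - a))]
  have hrefl : ∑ a ∈ Finset.range m', (m' - a) • RR a (m' - 1 - a)
      = ∑ a ∈ Finset.range m', (a + 1) • RR a (m' - 1 - a) := by
    rw [← Finset.sum_range_reflect (fun a => (m' - a) • RR a (m' - 1 - a)) m']
    apply Finset.sum_congr rfl
    intro a ha
    have ham := Finset.mem_range.1 ha
    rw [show m' - (m' - 1 - a) = a + 1 by omega, show m' - 1 - (m' - 1 - a) = a by omega,
      hRsym]
  have h2 : (∑ a ∈ Finset.range m', (m' - a) • RR a (m' - 1 - a))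
      + (∑ a ∈ Finset.range m', (m' - a) • RR a (m' - 1 - a)) = 0 := by
    nth_rewrite 2 [hrefl]
    rw [← Finset.sum_add_distrib]
    rw [Finset.sum_congr rfl (fun a ha => show (m' - a) • RR a (m' - 1 - a)
        + (a + 1) • RR a (m' - 1 - a) = (m' + 1) • RR a (m' - 1 - a) from by
      rw [← add_nsmul]
      congr 1
      have := Finset.mem_range.1 ha
      omega)]
    rw [← Finset.smul_sum, hSρ, smul_zero]
  have h3 : (2:ℂ) • (∑ a ∈ Finset.range m', (m' - a) • RR a (m' - 1 - a)) = 0 := by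
    rw [two_smul]
    exact h2
  have h4 := congrArg (fun z => ((2:ℂ)⁻¹) • z) h3
  simpa [smul_smul] using h4

end sumcc

/-! ### The main section -/

section main
variable [Ring A] [Algebra ℂ A] {d : ℕ} {p : ℕ → ZMod 2} {μ : ℕ → ℕ}

lemma off_zero (μ : ℕ → ℕ) : off μ 0 = 0 := by simp [off]
lemma off_one (μ : ℕ → ℕ) : off μ 1 = μ 0 := by simp [off]
lemma off_two (μ : ℕ → ℕ) : off μ 2 = μ 0 + μ 1 := by
  simp [off, Finset.sum_range_succ]

variable (S : RTT A d p) (G : Gauss S.t 2 μ)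

/-- delta collapse for the `c = 0` term of `decomp`. -/
lemma delta_collapse (m r a : ℕ) (ha : a < m) (W : ℕ → ℕ → ℕ → ℕ → A) :
    (∑ q1 ∈ Finset.range m, ∑ q2 ∈ Finset.range m, ∑ e1 ∈ Finset.range (r+1),
      ∑ e2 ∈ Finset.range (r+1-e1), (if a = q1 ∧ e1 = 0 then (1:A) else 0) * W q1 q2 e1 e2)
    = ∑ q2 ∈ Finset.range m, ∑ e2 ∈ Finset.range (r+1), W a q2 0 e2 := by
  rw [Finset.sum_eq_single a]
  · apply Finset.sum_congr rfl
    intro q2 _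
    rw [Finset.sum_eq_single 0]
    · simp
    · intro e1 _ he1
      apply Finset.sum_eq_zero
      intro e2 _
      simp [he1]
    · intro h
      exact absurd (Finset.mem_range.2 (Nat.succ_pos r)) h
  · intro q1 _ hq1
    apply Finset.sum_eq_zero; intro q2 _
    apply Finset.sum_eq_zero; intro e1 _
    apply Finset.sum_eq_zero; intro e2 _
    rw [if_neg, zero_mul]
    rintro ⟨h, -⟩
    exact hq1 h.symm
  · intro h
    exact absurd (Finset.mem_range.2 ha) h

lemma c1_vanish (bb r a j : ℕ) :
    (∑ q1 ∈ Finset.range (μ 1), ∑ q2 ∈ Finset.range (μ 1), ∑ e1 ∈ Finset.range (r+1),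
      ∑ e2 ∈ Finset.range (r+1-e1),
        G.F 0 1 a q1 e1 * G.D 1 q1 q2 e2 * G.E 1 bb q2 j (r - e1 - e2)) = 0 := by
  apply Finset.sum_eq_zero; intro q1 _
  apply Finset.sum_eq_zero; intro q2 _
  apply Finset.sum_eq_zero; intro e1 _
  apply Finset.sum_eq_zero; intro e2 _
  rw [G.F_high 0 1 a q1 e1 one_pos, zero_mul, zero_mul]

/-- `t_{ab} = D_{ab}` for `a b` in the first block. -/
lemma G3 (a b r : ℕ) (ha : a < μ 0) (hb : b < μ 0) :
    S.t a b r = G.D 0 a b r := by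
  have h := G.decomp 0 0 a b r (by norm_num) (by norm_num) ha hb
  rw [off_zero, zero_add, zero_add, Finset.sum_range_succ, Finset.sum_range_one] at h
  rw [c1_vanish] at h
  rw [add_zero] at h
  simp only [G.F_diag, G.E_diag, mul_assoc] at h
  rw [h, delta_collapse (μ 0) r a ha]
  rw [Finset.sum_eq_single b]
  · rw [Finset.sum_eq_single r]
    · simp
    · intro e2 he2m he2
      rw [mul_ite, mul_one, mul_zero, if_neg]
      rintro ⟨-, h2⟩
      rw [Nat.sub_zero] at h2
      exact he2 (Nat.le_antisymm (Nat.lt_succ_iff.mp (Finset.mem_range.mp he2m))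
        (Nat.le_of_sub_eq_zero h2))
    · intro hr
      exact absurd (Finset.mem_range.2 (Nat.lt_succ_self r)) hr
  · intro q2 _ hq2
    apply Finset.sum_eq_zero; intro e2 _
    simp [mul_ite, hq2]
  · intro hb'
    exact absurd (Finset.mem_range.2 hb) hb'

/-- `t_{a,μ₀+j} = ∑ D E` (coefficient form). -/
lemma T01 (a j r : ℕ) (ha : a < μ 0) (hj : j < μ 1) :
    S.t a (μ 0 + j) r = ∑ q ∈ Finset.range (μ 0), ∑ e ∈ Finset.range (r+1),
      G.D 0 a q e * G.E 0 1 q j (r - e) := by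
  have h := G.decomp 0 1 a j r (by norm_num) (by norm_num) ha hj
  rw [off_zero, zero_add, off_one] at h
  rw [Finset.sum_range_succ, Finset.sum_range_one] at h
  rw [c1_vanish] at h
  rw [add_zero] at h
  simp only [G.F_diag, mul_assoc] at h
  rw [h, delta_collapse (μ 0) r a ha]
  apply Finset.sum_congr rfl
  intro q _
  apply Finset.sum_congr rfl
  intro e _
  rw [Nat.sub_zero]

/-! ### Series-level facts from the Gauss structure -/

lemma F1x (a b : ℕ) (ha : a < μ 0) (hb : b < μ 0) :
    ∑ q ∈ Finset.range (μ 0), dX G a q * d'X G q b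
      = if a = b then (1 : PowerSeries (PowerSeries A)) else 0 := by
  have : ∀ q, dX G a q * d'X G q b
      = sx fun r => ∑ e ∈ Finset.range (r+1), G.D 0 a q e * G.D' 0 q b (r - e) := by
    intro q; rw [dX, d'X, sx_mul_sx]
  rw [Finset.sum_congr rfl fun q _ => this q, ← sx_sum]
  rw [show (fun r => ∑ q ∈ Finset.range (μ 0), ∑ e ∈ Finset.range (r+1),
        G.D 0 a q e * G.D' 0 q b (r - e))
      = fun r => if a = b ∧ r = 0 then (1:A) else 0 from
    funext fun r => G.D_inv 0 a b r (by norm_num) ha hb]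
  exact sx_delta _

lemma F2x (a b : ℕ) (ha : a < μ 0) (hb : b < μ 0) :
    ∑ q ∈ Finset.range (μ 0), d'X G a q * dX G q b
      = if a = b then (1 : PowerSeries (PowerSeries A)) else 0 := by
  have : ∀ q, d'X G a q * dX G q b
      = sx fun r => ∑ e ∈ Finset.range (r+1), G.D' 0 a q e * G.D 0 q b (r - e) := by
    intro q; rw [dX, d'X, sx_mul_sx]
  rw [Finset.sum_congr rfl fun q _ => this q, ← sx_sum]
  rw [show (fun r => ∑ q ∈ Finset.range (μ 0), ∑ e ∈ Finset.range (r+1),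
        G.D' 0 a q e * G.D 0 q b (r - e))
      = fun r => if a = b ∧ r = 0 then (1:A) else 0 from
    funext fun r => G.D_inv' 0 a b r (by norm_num) ha hb]
  exact sx_delta _

lemma F1y (a b : ℕ) (ha : a < μ 0) (hb : b < μ 0) :
    ∑ q ∈ Finset.range (μ 0), dY G a q * d'Y G q b
      = if a = b then (1 : PowerSeries (PowerSeries A)) else 0 := by
  have : ∀ q, dY G a q * d'Y G q b
      = sy fun r => ∑ e ∈ Finset.range (r+1), G.D 0 a q e * G.D' 0 q b (r - e) := by
    intro q; rw [dY, d'Y, sy_mul_sy]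
  rw [Finset.sum_congr rfl fun q _ => this q, ← sy_sum]
  rw [show (fun r => ∑ q ∈ Finset.range (μ 0), ∑ e ∈ Finset.range (r+1),
        G.D 0 a q e * G.D' 0 q b (r - e))
      = fun r => if a = b ∧ r = 0 then (1:A) else 0 from
    funext fun r => G.D_inv 0 a b r (by norm_num) ha hb]
  exact sy_delta _

lemma F2y (a b : ℕ) (ha : a < μ 0) (hb : b < μ 0) :
    ∑ q ∈ Finset.range (μ 0), d'Y G a q * dY G q b
      = if a = b then (1 : PowerSeries (PowerSeries A)) else 0 := by
  have : ∀ q, d'Y G a q * dY G q b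
      = sy fun r => ∑ e ∈ Finset.range (r+1), G.D' 0 a q e * G.D 0 q b (r - e) := by
    intro q; rw [dY, d'Y, sy_mul_sy]
  rw [Finset.sum_congr rfl fun q _ => this q, ← sy_sum]
  rw [show (fun r => ∑ q ∈ Finset.range (μ 0), ∑ e ∈ Finset.range (r+1),
        G.D' 0 a q e * G.D 0 q b (r - e))
      = fun r => if a = b ∧ r = 0 then (1:A) else 0 from
    funext fun r => G.D_inv' 0 a b r (by norm_num) ha hb]
  exact sy_delta _

lemma F3x (a j : ℕ) (ha : a < μ 0) (hj : j < μ 1) :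
    uX S (μ 0) a j = ∑ q ∈ Finset.range (μ 0), dX G a q * eX G q j := by
  have : ∀ q, dX G a q * eX G q j
      = sx fun r => ∑ e ∈ Finset.range (r+1), G.D 0 a q e * G.E 0 1 q j (r - e) := by
    intro q; rw [dX, eX, sx_mul_sx]
  rw [Finset.sum_congr rfl fun q _ => this q, ← sx_sum, uX,
    show S.t a (μ 0 + j) = (fun r => ∑ q ∈ Finset.range (μ 0),
        ∑ e ∈ Finset.range (r+1), G.D 0 a q e * G.E 0 1 q j (r - e)) from
      funext fun r => T01 S G a j r ha hj]

lemma F3y (a j : ℕ) (ha : a < μ 0) (hj : j < μ 1) :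
    uY S (μ 0) a j = ∑ q ∈ Finset.range (μ 0), dY G a q * eY G q j := by
  have : ∀ q, dY G a q * eY G q j
      = sy fun r => ∑ e ∈ Finset.range (r+1), G.D 0 a q e * G.E 0 1 q j (r - e) := by
    intro q; rw [dY, eY, sy_mul_sy]
  rw [Finset.sum_congr rfl fun q _ => this q, ← sy_sum, uY,
    show S.t a (μ 0 + j) = (fun r => ∑ q ∈ Finset.range (μ 0),
        ∑ e ∈ Finset.range (r+1), G.D 0 a q e * G.E 0 1 q j (r - e)) from
      funext fun r => T01 S G a j r ha hj]

lemma delta_mul_collapse (m i : ℕ) (hi : i < m) (f : ℕ → PowerSeries (PowerSeries A)) :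
    ∑ q ∈ Finset.range m, (if i = q then (1 : PowerSeries (PowerSeries A)) else 0) * f q
      = f i := by
  rw [Finset.sum_congr rfl (fun q _ => by rw [ite_mul, one_mul, zero_mul]),
    Finset.sum_ite_eq]
  simp [Finset.mem_range.2 hi]

lemma mul_delta_collapse (m i : ℕ) (hi : i < m) (f : ℕ → PowerSeries (PowerSeries A)) :
    ∑ q ∈ Finset.range m, f q * (if q = i then (1 : PowerSeries (PowerSeries A)) else 0)
      = f i := by
  rw [Finset.sum_congr rfl (fun q _ => by rw [mul_ite, mul_one, mul_zero]),
    Finset.sum_ite_eq']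
  simp [Finset.mem_range.2 hi]

lemma F3xinv (i j : ℕ) (hi : i < μ 0) (hj : j < μ 1) :
    eX G i j = ∑ b ∈ Finset.range (μ 0), d'X G i b * uX S (μ 0) b j := by
  have h : ∀ b (_ : b ∈ Finset.range (μ 0)), d'X G i b * uX S (μ 0) b j
      = ∑ q ∈ Finset.range (μ 0), d'X G i b * (dX G b q * eX G q j) := by
    intro b hb
    rw [F3x S G b j (Finset.mem_range.1 hb) hj, Finset.mul_sum]
  rw [Finset.sum_congr rfl h, Finset.sum_comm]
  have h2 : ∀ q (_ : q ∈ Finset.range (μ 0)),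
      (∑ b ∈ Finset.range (μ 0), d'X G i b * (dX G b q * eX G q j))
      = (if i = q then (1 : PowerSeries (PowerSeries A)) else 0) * eX G q j := by
    intro q hq
    rw [show (∑ b ∈ Finset.range (μ 0), d'X G i b * (dX G b q * eX G q j))
        = ∑ b ∈ Finset.range (μ 0), (d'X G i b * dX G b q) * eX G q j from
      Finset.sum_congr rfl fun b _ => (mul_assoc _ _ _).symm,
      ← Finset.sum_mul, F2x S G i q hi (Finset.mem_range.1 hq)]
  rw [Finset.sum_congr rfl h2, delta_mul_collapse (μ 0) i hi]

lemma F3yinv (i j : ℕ) (hi : i < μ 0) (hj : j < μ 1) :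
    eY G i j = ∑ b ∈ Finset.range (μ 0), d'Y G i b * uY S (μ 0) b j := by
  have h : ∀ b (_ : b ∈ Finset.range (μ 0)), d'Y G i b * uY S (μ 0) b j
      = ∑ q ∈ Finset.range (μ 0), d'Y G i b * (dY G b q * eY G q j) := by
    intro b hb
    rw [F3y S G b j (Finset.mem_range.1 hb) hj, Finset.mul_sum]
  rw [Finset.sum_congr rfl h, Finset.sum_comm]
  have h2 : ∀ q (_ : q ∈ Finset.range (μ 0)),
      (∑ b ∈ Finset.range (μ 0), d'Y G i b * (dY G b q * eY G q j))
      = (if i = q then (1 : PowerSeries (PowerSeries A)) else 0) * eY G q j := by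
    intro q hq
    rw [show (∑ b ∈ Finset.range (μ 0), d'Y G i b * (dY G b q * eY G q j))
        = ∑ b ∈ Finset.range (μ 0), (d'Y G i b * dY G b q) * eY G q j from
      Finset.sum_congr rfl fun b _ => (mul_assoc _ _ _).symm,
      ← Finset.sum_mul, F2y S G i q hi (Finset.mem_range.1 hq)]
  rw [Finset.sum_congr rfl h2, delta_mul_collapse (μ 0) i hi]

/-! ### The series form of the RTT relation -/

lemma star (α β γ δ : ℕ) (hα : α < d) (hβ : β < d) (hγ : γ < d) (hδ : δ < d) (r s : ℕ) :
    scomm (sgn ((p α + p β) * (p γ + p δ))) (S.t α β (r+1)) (S.t γ δ s)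
      - scomm (sgn ((p α + p β) * (p γ + p δ))) (S.t α β r) (S.t γ δ (s+1))
    = sgn (p α * p β + p α * p γ + p β * p γ) •
        (S.t γ β r * S.t α δ s - S.t γ β s * S.t α δ r) := by
  have h1 := S.rtt α β γ δ (r+1) s hα hβ hγ hδ
  have h2 := S.rtt α β γ δ r (s+1) hα hβ hγ hδ
  have e1 : ∀ g : ℕ, r + 1 + s - 1 - g = r + s - g := fun g => by omega
  have e2 : ∀ g : ℕ, r + (s+1) - 1 - g = r + s - g := fun g => by omega
  simp only [e1] at h1
  simp only [e2] at h2
  rw [h1, h2, ← smul_sub]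
  congr 1
  rcases lt_trichotomy r s with h | h | h
  · rw [min_eq_left (by omega), min_eq_left (by omega), Finset.sum_range_succ,
      add_sub_cancel_left, show r + s - r = s by omega]
  · subst h
    rw [min_eq_right (by omega), min_eq_left (by omega)]
    simp only [sub_self]
  · rw [min_eq_right (by omega), min_eq_right (by omega), Finset.sum_range_succ,
      show r + s - s = r by omega]
    abel

lemma cf_scomm_xy (ε : ℂ) (f g : ℕ → A) (r s : ℕ) :
    cf r s (scomm ε (sx f) (sy g)) = scomm ε (f r) (g s) := by
  simp [scomm, cf_sub, cf_smul, cf_sx_mul_sy, cf_sy_mul_sx]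

lemma L1 (α β γ δ : ℕ) (hα : α < d) (hβ : β < d) (hγ : γ < d) (hδ : δ < d) :
    (Yv - Xv) * scomm (sgn ((p α + p β) * (p γ + p δ))) (sx (S.t α β)) (sy (S.t γ δ))
    = sgn (p α * p β + p α * p γ + p β * p γ) •
        (Xv * (Yv * (sx (S.t γ β) * sy (S.t α δ) - sy (S.t γ β) * sx (S.t α δ)))) := by
  apply cf_ext
  intro r s
  rw [sub_mul, cf_sub, cf_smul]
  rcases r with _ | r <;> rcases s with _ | s
  · rw [cf_Yv_mul_zero, cf_Xv_mul_zero, cf_Xv_mul_zero]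
    simp
  · rw [cf_Yv_mul, cf_Xv_mul_zero, cf_Xv_mul_zero, cf_scomm_xy, S.t_zero]
    split_ifs with h
    · subst h
      rw [z2_add_self, zero_mul, sgn_zero, scomm_one_one_left]
      simp
    · rw [scomm_zero_left]
      simp
  · rw [cf_Yv_mul_zero, cf_Xv_mul, cf_scomm_xy, S.t_zero]
    have hy : cf r 0 (Yv * (sx (S.t γ β) * sy (S.t α δ) - sy (S.t γ β) * sx (S.t α δ))) = 0 :=
      cf_Yv_mul_zero _ _
    rw [cf_Xv_mul, hy]
    split_ifs with h
    · subst h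
      rw [z2_add_self, mul_zero, sgn_zero, scomm_one_right]
      simp
    · rw [scomm_zero_right]
      simp
  · rw [cf_Yv_mul, cf_Xv_mul, cf_Xv_mul, cf_Yv_mul, cf_scomm_xy, cf_scomm_xy,
      cf_sub, cf_sx_mul_sy, cf_sy_mul_sx]
    exact star S α β γ δ hα hβ hγ hδ r s


/-! ### Bounds -/

lemma bd1 (hd : off μ 2 = d) {a : ℕ} (ha : a < μ 0) : a < d := by
  rw [← hd, off_two]; omega

lemma bd2 (hd : off μ 2 = d) {j : ℕ} (hj : j < μ 1) : μ 0 + j < d := by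
  rw [← hd, off_two]; omega

/-! ### Instances of L1 -/

lemma Rtt (hd : off μ 2 = d) (a c j k : ℕ) (ha : a < μ 0) (hc : c < μ 0)
    (hj : j < μ 1) (hk : k < μ 1) :
    (Yv - Xv) * scomm (sgn ((p a + p (μ 0 + j)) * (p c + p (μ 0 + k))))
        (uX S (μ 0) a j) (uY S (μ 0) c k)
    = sgn (p a * p (μ 0 + j) + p a * p c + p (μ 0 + j) * p c) •
        (Xv * (Yv * (uX S (μ 0) c j * uY S (μ 0) a k - uY S (μ 0) c j * uX S (μ 0) a k))) := by
  simpa only [uX, uY] using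
    L1 S a (μ 0 + j) c (μ 0 + k) (bd1 hd ha) (bd2 hd hj) (bd1 hd hc) (bd2 hd hk)

lemma Rtd (hd : off μ 2 = d) (a j c q : ℕ) (ha : a < μ 0) (hj : j < μ 1)
    (hc : c < μ 0) (hq : q < μ 0) :
    (Yv - Xv) * scomm (sgn ((p a + p (μ 0 + j)) * (p c + p q)))
        (uX S (μ 0) a j) (dY G c q)
    = sgn (p a * p (μ 0 + j) + p a * p c + p (μ 0 + j) * p c) •
        (Xv * (Yv * (uX S (μ 0) c j * dY G a q - uY S (μ 0) c j * dX G a q))) := by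
  have h1 : S.t c q = G.D 0 c q := funext fun r => G3 S G c q r hc hq
  have h2 : S.t a q = G.D 0 a q := funext fun r => G3 S G a q r ha hq
  have := L1 S a (μ 0 + j) c q (bd1 hd ha) (bd2 hd hj) (bd1 hd hc) (bd1 hd hq)
  rw [h1, h2] at this
  simpa only [uX, uY, dX, dY] using this

lemma Rdt (hd : off μ 2 = d) (a b c k : ℕ) (ha : a < μ 0) (hb : b < μ 0)
    (hc : c < μ 0) (hk : k < μ 1) :
    (Yv - Xv) * scomm (sgn ((p a + p b) * (p c + p (μ 0 + k))))
        (dX G a b) (uY S (μ 0) c k)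
    = sgn (p a * p b + p a * p c + p b * p c) •
        (Xv * (Yv * (dX G c b * uY S (μ 0) a k - dY G c b * uX S (μ 0) a k))) := by
  have h1 : S.t a b = G.D 0 a b := funext fun r => G3 S G a b r ha hb
  have h2 : S.t c b = G.D 0 c b := funext fun r => G3 S G c b r hc hb
  have := L1 S a b c (μ 0 + k) (bd1 hd ha) (bd1 hd hb) (bd1 hd hc) (bd2 hd hk)
  rw [h1, h2] at this
  simpa only [uX, uY, dX, dY] using this

lemma Rdd (hd : off μ 2 = d) (a b c q : ℕ) (ha : a < μ 0) (hb : b < μ 0)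
    (hc : c < μ 0) (hq : q < μ 0) :
    (Yv - Xv) * scomm (sgn ((p a + p b) * (p c + p q))) (dX G a b) (dY G c q)
    = sgn (p a * p b + p a * p c + p b * p c) •
        (Xv * (Yv * (dX G c b * dY G a q - dY G c b * dX G a q))) := by
  have h1 : S.t a b = G.D 0 a b := funext fun r => G3 S G a b r ha hb
  have h2 : S.t c b = G.D 0 c b := funext fun r => G3 S G c b r hc hb
  have h3 : S.t c q = G.D 0 c q := funext fun r => G3 S G c q r hc hq
  have h4 : S.t a q = G.D 0 a q := funext fun r => G3 S G a q r ha hq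
  have := L1 S a b c q (bd1 hd ha) (bd1 hd hb) (bd1 hd hc) (bd1 hd hq)
  rw [h1, h2, h3, h4] at this
  simpa only [dX, dY] using this

/-! ### Claim I -/

def Lam (a k : ℕ) : PowerSeries (PowerSeries A) :=
  ∑ q ∈ Finset.range (μ 0), dX G a q * (eY G q k - eX G q k)

lemma GEN1 {R : Type*} [Ring R] [Algebra ℂ R] (σ : ℂ) (X Y a b c e f : R) :
    σ • (X * (Y * (a * b - c * e))) - σ • (X * (Y * (a * b - c * f)))
      = σ • (X * (Y * (c * (f - e)))) := by
  rw [← smul_sub, ← mul_sub, ← mul_sub]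
  congr 3
  noncomm_ring

lemma ClaimI (hd : off μ 2 = d) (a h j k : ℕ) (ha : a < μ 0) (hh : h < μ 0)
    (hj : j < μ 1) (hk : k < μ 1) :
    (Yv - Xv) * scomm (sgn ((p a + p (μ 0 + j)) * (p h + p (μ 0 + k))))
        (uX S (μ 0) a j) (eY G h k)
    = sgn (p a * p (μ 0 + j) + p a * p h + p (μ 0 + j) * p h) •
        (Xv * (Yv * (eY G h j * Lam S G a k))) := by
  set Φ' : ℕ → PowerSeries (PowerSeries A) := fun q => sgn ((p a + p (μ 0 + j)) * p q) •
    ((Yv - Xv) * scomm (sgn ((p a + p (μ 0 + j)) * (p q + p (μ 0 + k))))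
      (uX S (μ 0) a j) (eY G q k)) with hΦ'
  have C1 : ∀ c, c < μ 0 → ∑ q ∈ Finset.range (μ 0), dY G c q * Φ' q
      = sgn (p a * p (μ 0 + j)) • (Xv * (Yv * (uY S (μ 0) c j * Lam S G a k))) := by
    intro c hc
    have hexp : (Yv - Xv) * scomm (sgn ((p a + p (μ 0 + j)) * (p c + p (μ 0 + k))))
        (uX S (μ 0) a j) (uY S (μ 0) c k)
        = (∑ q ∈ Finset.range (μ 0), (sgn (p a * p (μ 0 + j) + p a * p c + p (μ 0 + j) * p c) •
            (Xv * (Yv * (uX S (μ 0) c j * dY G a q - uY S (μ 0) c j * dX G a q)))) * eY G q k)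
          + ∑ q ∈ Finset.range (μ 0), sgn ((p a + p (μ 0 + j)) * (p c + p q)) •
              (dY G c q * ((Yv - Xv) * scomm (sgn ((p a + p (μ 0 + j)) * (p q + p (μ 0 + k))))
                (uX S (μ 0) a j) (eY G q k))) := by
      rw [F3y S G c k hc hk, scomm_sum_right, Finset.mul_sum, ← Finset.sum_add_distrib]
      refine Finset.sum_congr rfl fun q hq => ?_
      rw [sgn_factor (p a + p (μ 0 + j)) (p c) (p q) (p (μ 0 + k)), scomm_mul_right, mul_add]
      congr 1
      · rw [← mul_assoc, Rtd S G hd a j c q ha hj hc (Finset.mem_range.1 hq)]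
      · rw [mul_smul_comm]
        congr 1
        rw [← mul_assoc, YX_commute, mul_assoc]
    have hRtt := Rtt S hd a c j k ha hc hj hk
    have hsum : ∑ q ∈ Finset.range (μ 0), sgn ((p a + p (μ 0 + j)) * (p c + p q)) •
        (dY G c q * ((Yv - Xv) * scomm (sgn ((p a + p (μ 0 + j)) * (p q + p (μ 0 + k))))
          (uX S (μ 0) a j) (eY G q k)))
        = sgn (p a * p (μ 0 + j) + p a * p c + p (μ 0 + j) * p c) •
            (Xv * (Yv * (uX S (μ 0) c j * uY S (μ 0) a k - uY S (μ 0) c j * uX S (μ 0) a k)))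
          - ∑ q ∈ Finset.range (μ 0),
            (sgn (p a * p (μ 0 + j) + p a * p c + p (μ 0 + j) * p c) •
              (Xv * (Yv * (uX S (μ 0) c j * dY G a q - uY S (μ 0) c j * dX G a q)))) * eY G q k := by
      rw [← hRtt, hexp]; abel
    have hfirst : ∑ q ∈ Finset.range (μ 0),
        (sgn (p a * p (μ 0 + j) + p a * p c + p (μ 0 + j) * p c) •
          (Xv * (Yv * (uX S (μ 0) c j * dY G a q - uY S (μ 0) c j * dX G a q)))) * eY G q k
        = sgn (p a * p (μ 0 + j) + p a * p c + p (μ 0 + j) * p c) •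
            (Xv * (Yv * (uX S (μ 0) c j * uY S (μ 0) a k
              - uY S (μ 0) c j * (∑ q ∈ Finset.range (μ 0), dX G a q * eY G q k)))) := by
      rw [Finset.sum_congr rfl fun q _ => smul_mul_assoc _ _ (eY G q k), ← Finset.smul_sum]
      congr 1
      rw [Finset.sum_congr rfl fun q _ => XY_mul_right _ _, ← Finset.mul_sum, ← Finset.mul_sum]
      congr 2
      rw [Finset.sum_congr rfl fun q _ => sub_mul _ _ _, Finset.sum_sub_distrib]
      congr 1
      · rw [Finset.sum_congr rfl fun q _ => mul_assoc _ _ _, ← Finset.mul_sum,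
          F3y S G a k ha hk]
      · rw [Finset.sum_congr rfl fun q _ => mul_assoc _ _ _, ← Finset.mul_sum]
    have hLam : Lam S G a k
        = (∑ q ∈ Finset.range (μ 0), dX G a q * eY G q k) - uX S (μ 0) a k := by
      rw [Lam, F3x S G a k ha hk, ← Finset.sum_sub_distrib]
      exact Finset.sum_congr rfl fun q _ => mul_sub _ _ _
    have perq : ∀ q, dY G c q * Φ' q = sgn ((p a + p (μ 0 + j)) * p c) •
        (sgn ((p a + p (μ 0 + j)) * (p c + p q)) •
          (dY G c q * ((Yv - Xv) * scomm (sgn ((p a + p (μ 0 + j)) * (p q + p (μ 0 + k))))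
            (uX S (μ 0) a j) (eY G q k)))) := by
      intro q
      simp only [hΦ']
      rw [mul_smul_comm, smul_smul, ← sgn_add]
      congr 1
      have hz : ∀ x c q : ZMod 2, sgn (x * q) = sgn (x * c + x * (c + q)) := by
        have : ∀ x c q : ZMod 2, x * q = x * c + x * (c + q) := by decide
        intro x c q
        rw [this x c q]
      exact hz _ _ _
    rw [Finset.sum_congr rfl fun q _ => perq q, ← Finset.smul_sum, hsum, hfirst, GEN1,
      ← hLam, smul_smul, ← sgn_add]
    congr 2
    have hz : ∀ x y c : ZMod 2, (x + y) * c + (x * y + x * c + y * c) = x * y := by decide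
    exact hz (p a) (p (μ 0 + j)) (p c)
  -- collapse with d'Y
  have C2 : Φ' h = ∑ c ∈ Finset.range (μ 0), d'Y G h c *
      (∑ q ∈ Finset.range (μ 0), dY G c q * Φ' q) := by
    rw [Finset.sum_congr rfl fun c _ => Finset.mul_sum _ _ _, Finset.sum_comm]
    rw [Finset.sum_congr rfl fun q _ => (Finset.sum_congr rfl fun c _ => (mul_assoc _ _ _).symm)]
    rw [Finset.sum_congr rfl fun q _ => (Finset.sum_mul _ _ _).symm]
    rw [Finset.sum_congr rfl fun q hq => by
      rw [F2y S G h q hh (Finset.mem_range.1 hq)]]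
    rw [delta_mul_collapse (μ 0) h hh Φ']
  have C3 : Φ' h = sgn (p a * p (μ 0 + j)) • (Xv * (Yv * (eY G h j * Lam S G a k))) := by
    rw [C2, Finset.sum_congr rfl fun c hc => by rw [C1 c (Finset.mem_range.1 hc)]]
    rw [Finset.sum_congr rfl fun c _ => mul_smul_comm _ _ _, ← Finset.smul_sum]
    congr 1
    rw [Finset.sum_congr rfl fun c _ => XY_pull _ _, ← Finset.mul_sum, ← Finset.mul_sum]
    congr 2
    rw [Finset.sum_congr rfl fun c _ => (mul_assoc _ _ _).symm, ← Finset.sum_mul,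
      ← F3yinv S G h j hh hj]
  have final := congrArg (fun Z => sgn ((p a + p (μ 0 + j)) * p h) • Z) C3
  simp only [hΦ', sgn_smul_smul] at final
  rw [final, sgn_smul_sgn_smul]
  congr 2
  have hz : ∀ x y z : ZMod 2, (x + y) * z + x * y = x * y + x * z + y * z := by decide
  exact hz (p a) (p (μ 0 + j)) (p h)


/-! ### Claim II -/

lemma ClaimII (hd : off μ 2 = d) (a b h k : ℕ) (ha : a < μ 0) (hb : b < μ 0)
    (hh : h < μ 0) (hk : k < μ 1) :
    (Yv - Xv) * scomm (sgn ((p a + p b) * (p h + p (μ 0 + k)))) (dX G a b) (eY G h k)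
    = if h = b then sgn (p b) • (Xv * (Yv * Lam S G a k)) else 0 := by
  set Φ' : ℕ → PowerSeries (PowerSeries A) := fun q => sgn ((p a + p b) * p q) •
    ((Yv - Xv) * scomm (sgn ((p a + p b) * (p q + p (μ 0 + k))))
      (dX G a b) (eY G q k)) with hΦ'
  have C1 : ∀ c, c < μ 0 → ∑ q ∈ Finset.range (μ 0), dY G c q * Φ' q
      = sgn (p a * p b) • (Xv * (Yv * (dY G c b * Lam S G a k))) := by
    intro c hc
    have hexp : (Yv - Xv) * scomm (sgn ((p a + p b) * (p c + p (μ 0 + k))))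
        (dX G a b) (uY S (μ 0) c k)
        = (∑ q ∈ Finset.range (μ 0), (sgn (p a * p b + p a * p c + p b * p c) •
            (Xv * (Yv * (dX G c b * dY G a q - dY G c b * dX G a q)))) * eY G q k)
          + ∑ q ∈ Finset.range (μ 0), sgn ((p a + p b) * (p c + p q)) •
              (dY G c q * ((Yv - Xv) * scomm (sgn ((p a + p b) * (p q + p (μ 0 + k))))
                (dX G a b) (eY G q k))) := by
      rw [F3y S G c k hc hk, scomm_sum_right, Finset.mul_sum, ← Finset.sum_add_distrib]
      refine Finset.sum_congr rfl fun q hq => ?_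
      rw [sgn_factor (p a + p b) (p c) (p q) (p (μ 0 + k)), scomm_mul_right, mul_add]
      congr 1
      · rw [← mul_assoc, Rdd S G hd a b c q ha hb hc (Finset.mem_range.1 hq)]
      · rw [mul_smul_comm]
        congr 1
        rw [← mul_assoc, YX_commute, mul_assoc]
    have hRdt := Rdt S G hd a b c k ha hb hc hk
    have hsum : ∑ q ∈ Finset.range (μ 0), sgn ((p a + p b) * (p c + p q)) •
        (dY G c q * ((Yv - Xv) * scomm (sgn ((p a + p b) * (p q + p (μ 0 + k))))
          (dX G a b) (eY G q k)))
        = sgn (p a * p b + p a * p c + p b * p c) •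
            (Xv * (Yv * (dX G c b * uY S (μ 0) a k - dY G c b * uX S (μ 0) a k)))
          - ∑ q ∈ Finset.range (μ 0),
            (sgn (p a * p b + p a * p c + p b * p c) •
              (Xv * (Yv * (dX G c b * dY G a q - dY G c b * dX G a q)))) * eY G q k := by
      rw [← hRdt, hexp]; abel
    have hfirst : ∑ q ∈ Finset.range (μ 0),
        (sgn (p a * p b + p a * p c + p b * p c) •
          (Xv * (Yv * (dX G c b * dY G a q - dY G c b * dX G a q)))) * eY G q k
        = sgn (p a * p b + p a * p c + p b * p c) •
            (Xv * (Yv * (dX G c b * uY S (μ 0) a k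
              - dY G c b * (∑ q ∈ Finset.range (μ 0), dX G a q * eY G q k)))) := by
      rw [Finset.sum_congr rfl fun q _ => smul_mul_assoc _ _ (eY G q k), ← Finset.smul_sum]
      congr 1
      rw [Finset.sum_congr rfl fun q _ => XY_mul_right _ _, ← Finset.mul_sum, ← Finset.mul_sum]
      congr 2
      rw [Finset.sum_congr rfl fun q _ => sub_mul _ _ _, Finset.sum_sub_distrib]
      congr 1
      · rw [Finset.sum_congr rfl fun q _ => mul_assoc _ _ _, ← Finset.mul_sum,
          F3y S G a k ha hk]
      · rw [Finset.sum_congr rfl fun q _ => mul_assoc _ _ _, ← Finset.mul_sum]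
    have hLam : Lam S G a k
        = (∑ q ∈ Finset.range (μ 0), dX G a q * eY G q k) - uX S (μ 0) a k := by
      rw [Lam, F3x S G a k ha hk, ← Finset.sum_sub_distrib]
      exact Finset.sum_congr rfl fun q _ => mul_sub _ _ _
    have perq : ∀ q, dY G c q * Φ' q = sgn ((p a + p b) * p c) •
        (sgn ((p a + p b) * (p c + p q)) •
          (dY G c q * ((Yv - Xv) * scomm (sgn ((p a + p b) * (p q + p (μ 0 + k))))
            (dX G a b) (eY G q k)))) := by
      intro q
      simp only [hΦ']
      rw [mul_smul_comm, smul_smul, ← sgn_add]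
      congr 1
      have hz : ∀ x c q : ZMod 2, sgn (x * q) = sgn (x * c + x * (c + q)) := by
        have : ∀ x c q : ZMod 2, x * q = x * c + x * (c + q) := by decide
        intro x c q
        rw [this x c q]
      exact hz _ _ _
    rw [Finset.sum_congr rfl fun q _ => perq q, ← Finset.smul_sum, hsum, hfirst, GEN1,
      ← hLam, smul_smul, ← sgn_add]
    congr 2
    have hz : ∀ x y c : ZMod 2, (x + y) * c + (x * y + x * c + y * c) = x * y := by decide
    exact hz (p a) (p b) (p c)
  have C2 : Φ' h = ∑ c ∈ Finset.range (μ 0), d'Y G h c *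
      (∑ q ∈ Finset.range (μ 0), dY G c q * Φ' q) := by
    rw [Finset.sum_congr rfl fun c _ => Finset.mul_sum _ _ _, Finset.sum_comm]
    rw [Finset.sum_congr rfl fun q _ => (Finset.sum_congr rfl fun c _ => (mul_assoc _ _ _).symm)]
    rw [Finset.sum_congr rfl fun q _ => (Finset.sum_mul _ _ _).symm]
    rw [Finset.sum_congr rfl fun q hq => by
      rw [F2y S G h q hh (Finset.mem_range.1 hq)]]
    rw [delta_mul_collapse (μ 0) h hh Φ']
  have C3 : Φ' h = sgn (p a * p b) •
      (Xv * (Yv * ((if h = b then (1 : PowerSeries (PowerSeries A)) else 0) * Lam S G a k))) := by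
    rw [C2, Finset.sum_congr rfl fun c hc => by rw [C1 c (Finset.mem_range.1 hc)]]
    rw [Finset.sum_congr rfl fun c _ => mul_smul_comm _ _ _, ← Finset.smul_sum]
    congr 1
    rw [Finset.sum_congr rfl fun c _ => XY_pull _ _, ← Finset.mul_sum, ← Finset.mul_sum]
    congr 2
    rw [Finset.sum_congr rfl fun c _ => (mul_assoc _ _ _).symm, ← Finset.sum_mul,
      F2y S G h b hh hb]
  have final := congrArg (fun Z => sgn ((p a + p b) * p h) • Z) C3
  simp only [hΦ', sgn_smul_smul] at final
  rw [final, sgn_smul_sgn_smul]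
  split_ifs with hcase
  · subst hcase
    rw [one_mul]
    congr 2
    have hz : ∀ x y : ZMod 2, (x + y) * y + x * y = y := by decide
    exact hz (p a) (p h)
  · rw [zero_mul, mul_zero, mul_zero, smul_zero]

/-! ### Claim III -/

lemma DelX (i k : ℕ) (hi : i < μ 0) (hk : k < μ 1) :
    ∑ b ∈ Finset.range (μ 0), d'X G i b * Lam S G b k = eY G i k - eX G i k := by
  unfold Lam
  rw [Finset.sum_congr rfl fun b _ => Finset.mul_sum _ _ _, Finset.sum_comm]
  rw [Finset.sum_congr rfl fun q _ => (Finset.sum_congr rfl fun b _ => (mul_assoc _ _ _).symm)]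
  rw [Finset.sum_congr rfl fun q _ => (Finset.sum_mul _ _ _).symm]
  rw [Finset.sum_congr rfl fun q hq => by
    rw [F2x S G i q hi (Finset.mem_range.1 hq)]]
  rw [delta_mul_collapse (μ 0) i hi]

lemma delta_mul_collapse' (m i : ℕ) (hi : i < m) (M : PowerSeries (PowerSeries A))
    (f : ℕ → PowerSeries (PowerSeries A)) :
    ∑ q ∈ Finset.range m, (if i = q then M else 0) * f q = M * f i := by
  rw [Finset.sum_congr rfl fun q _ => show (if i = q then M else 0) * f q
      = if i = q then M * f q else 0 from by split_ifs <;> simp]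
  rw [Finset.sum_ite_eq]
  simp [Finset.mem_range.2 hi]

lemma ClaimIII (hd : off μ 2 = d) (i b h k : ℕ) (hi : i < μ 0) (hb : b < μ 0)
    (hh : h < μ 0) (hk : k < μ 1) :
    (Yv - Xv) * scomm (sgn ((p i + p b) * (p h + p (μ 0 + k)))) (d'X G i b) (eY G h k)
    = - (sgn (p b * p h + p b * p (μ 0 + k) + p h * p (μ 0 + k)) •
        (Xv * (Yv * ((eY G i k - eX G i k) * d'X G h b)))) := by
  set Θ' : ℕ → PowerSeries (PowerSeries A) := fun t => sgn (p t * (p h + p (μ 0 + k))) •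
    ((Yv - Xv) * scomm (sgn ((p i + p t) * (p h + p (μ 0 + k))))
      (d'X G i t) (eY G h k)) with hΘ'
  have D1 : ∀ q, q < μ 0 → ∑ t ∈ Finset.range (μ 0), Θ' t * dX G t q
      = -(if h = q then sgn (p h * (p h + p (μ 0 + k)) + p h) •
          (Xv * (Yv * (eY G i k - eX G i k))) else 0) := by
    intro q hq
    have hzero : (Yv - Xv) * scomm (sgn ((p i + p q) * (p h + p (μ 0 + k))))
        ((if i = q then (1 : PowerSeries (PowerSeries A)) else 0)) (eY G h k) = 0 := by
      split_ifs with hiq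
      · subst hiq
        rw [z2_add_self, zero_mul, sgn_zero, scomm_one_one_left, mul_zero]
      · rw [scomm_zero_left, mul_zero]
    rw [← F2x S G i q hi hq] at hzero
    rw [scomm_sum_left, Finset.mul_sum] at hzero
    have hexp : ∀ t (_ : t ∈ Finset.range (μ 0)),
        (Yv - Xv) * scomm (sgn ((p i + p q) * (p h + p (μ 0 + k))))
          (d'X G i t * dX G t q) (eY G h k)
        = d'X G i t * (if h = q then sgn (p q) • (Xv * (Yv * Lam S G t k)) else 0)
          + sgn ((p t + p q) * (p h + p (μ 0 + k))) •
            (((Yv - Xv) * scomm (sgn ((p i + p t) * (p h + p (μ 0 + k))))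
              (d'X G i t) (eY G h k)) * dX G t q) := by
      intro t ht
      have hsplit : sgn ((p i + p q) * (p h + p (μ 0 + k)))
          = sgn ((p t + p q) * (p h + p (μ 0 + k))) * sgn ((p i + p t) * (p h + p (μ 0 + k))) := by
        rw [← sgn_add]
        congr 1
        have : ∀ i t q x : ZMod 2, (i + q) * x = (t + q) * x + (i + t) * x := by decide
        exact this _ _ _ _
      rw [hsplit, scomm_mul_left, mul_add]
      congr 1
      · rw [show (Yv - Xv) * (d'X G i t * scomm (sgn ((p t + p q) * (p h + p (μ 0 + k))))
              (dX G t q) (eY G h k))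
            = d'X G i t * ((Yv - Xv) * scomm (sgn ((p t + p q) * (p h + p (μ 0 + k))))
              (dX G t q) (eY G h k)) from by rw [← mul_assoc, YX_commute, mul_assoc]]
        rw [ClaimII S G hd t q h k (Finset.mem_range.1 ht) hq hh hk]
      · rw [mul_smul_comm, ← mul_assoc]
    rw [Finset.sum_congr rfl hexp, Finset.sum_add_distrib] at hzero
    have hfirst : ∑ t ∈ Finset.range (μ 0),
        d'X G i t * (if h = q then sgn (p q) • (Xv * (Yv * Lam S G t k)) else 0)
        = if h = q then sgn (p q) • (Xv * (Yv * (eY G i k - eX G i k))) else 0 := by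
      split_ifs with hcase
      · rw [Finset.sum_congr rfl fun t _ => by
          rw [mul_smul_comm, XY_pull], ← Finset.smul_sum, ← Finset.mul_sum, ← Finset.mul_sum,
          DelX S G i k hi hk]
      · simp
    rw [hfirst] at hzero
    have hconv : ∀ t, sgn ((p t + p q) * (p h + p (μ 0 + k))) •
        (((Yv - Xv) * scomm (sgn ((p i + p t) * (p h + p (μ 0 + k))))
          (d'X G i t) (eY G h k)) * dX G t q)
        = sgn (p q * (p h + p (μ 0 + k))) • (Θ' t * dX G t q) := by
      intro t
      simp only [hΘ']
      rw [smul_mul_assoc, smul_smul, ← sgn_add]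
      congr 1
      have : ∀ t q x : ZMod 2, (t + q) * x = q * x + t * x := by decide
      rw [this]
    rw [Finset.sum_congr rfl fun t _ => hconv t, ← Finset.smul_sum] at hzero
    have h2 := eq_neg_of_add_eq_zero_right hzero
    have h3 := congrArg (fun Z => sgn (p q * (p h + p (μ 0 + k))) • Z) h2
    simp only [sgn_smul_smul, smul_neg] at h3
    rw [h3]
    congr 1
    split_ifs with hcase
    · subst hcase
      rw [smul_smul, ← sgn_add]
    · rw [smul_zero]
  have D2 : Θ' b = ∑ q ∈ Finset.range (μ 0),
      (∑ t ∈ Finset.range (μ 0), Θ' t * dX G t q) * d'X G q b := by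
    rw [Finset.sum_congr rfl fun q _ => Finset.sum_mul _ _ _, Finset.sum_comm]
    rw [Finset.sum_congr rfl fun t _ => (Finset.sum_congr rfl fun q _ => mul_assoc _ _ _)]
    rw [Finset.sum_congr rfl fun t _ => (Finset.mul_sum _ _ _).symm]
    rw [Finset.sum_congr rfl fun t ht => by
      rw [F1x S G t b (Finset.mem_range.1 ht) hb]]
    rw [mul_delta_collapse (μ 0) b hb Θ']
  have D3 : Θ' b = -(sgn (p h * (p h + p (μ 0 + k)) + p h) •
      (Xv * (Yv * ((eY G i k - eX G i k) * d'X G h b)))) := by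
    rw [D2, Finset.sum_congr rfl fun q hq => by
      rw [D1 q (Finset.mem_range.1 hq), neg_mul]]
    rw [Finset.sum_neg_distrib,
      delta_mul_collapse' (μ 0) h hh _ (fun q => d'X G q b)]
    rw [smul_mul_assoc, XY_mul_right]
  have final := congrArg (fun Z => sgn (p b * (p h + p (μ 0 + k))) • Z) D3
  simp only [hΘ', sgn_smul_smul] at final
  rw [final, smul_neg, smul_smul, ← sgn_add]
  congr 3
  have : ∀ b h x : ZMod 2, b * (h + x) + (h * (h + x) + h) = b * h + b * x + h * x := by decide
  exact this _ _ _


/-! ### EE: peeling `e_X` -/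

lemma scomm_recover [Ring B] [Algebra ℂ B] (ε : ℂ) (x y : B) (h : ε * ε = 1) :
    x * y = scomm ε x y + ε • (y * x) := by simp [scomm]

lemma EE (hd : off μ 2 = d) (i h j k : ℕ) (hi : i < μ 0) (hh : h < μ 0)
    (hj : j < μ 1) (hk : k < μ 1) :
    (Yv - Xv) * scomm (sgn ((p i + p (μ 0 + j)) * (p h + p (μ 0 + k)))) (eX G i j) (eY G h k)
    = Xv * (Yv * (∑ b ∈ Finset.range (μ 0),
        sgn (p b * p (μ 0 + j) + p b * p h + p (μ 0 + j) * p h) •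
          (d'X G i b * (eY G h j * Lam S G b k))))
      - sgn (p h * p (μ 0 + j) + p (μ 0 + j) * p (μ 0 + k) + p h * p (μ 0 + k)) •
        (Xv * (Yv * ((eY G i k - eX G i k) * eX G h j))) := by
  rw [F3xinv S G i j hi hj, scomm_sum_left, Finset.mul_sum]
  have hterm : ∀ b (_ : b ∈ Finset.range (μ 0)),
      (Yv - Xv) * scomm (sgn ((p i + p (μ 0 + j)) * (p h + p (μ 0 + k))))
        (d'X G i b * uX S (μ 0) b j) (eY G h k)
      = Xv * (Yv * (sgn (p b * p (μ 0 + j) + p b * p h + p (μ 0 + j) * p h) •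
          (d'X G i b * (eY G h j * Lam S G b k))))
        + -(sgn (p h * p (μ 0 + j) + p (μ 0 + j) * p (μ 0 + k) + p h * p (μ 0 + k)) •
            (Xv * (Yv * ((eY G i k - eX G i k) * (d'X G h b * uX S (μ 0) b j))))) := by
    intro b hb
    have hbm := Finset.mem_range.1 hb
    have hsplit : sgn ((p i + p (μ 0 + j)) * (p h + p (μ 0 + k)))
        = sgn ((p b + p (μ 0 + j)) * (p h + p (μ 0 + k)))
          * sgn ((p i + p b) * (p h + p (μ 0 + k))) := by
      rw [← sgn_add]
      congr 1
      have : ∀ i t q x : ZMod 2, (i + q) * x = (t + q) * x + (i + t) * x := by decide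
      exact this _ _ _ _
    rw [hsplit, scomm_mul_left, mul_add]
    congr 1
    · rw [show (Yv - Xv) * (d'X G i b * scomm (sgn ((p b + p (μ 0 + j)) * (p h + p (μ 0 + k))))
            (uX S (μ 0) b j) (eY G h k))
          = d'X G i b * ((Yv - Xv) * scomm (sgn ((p b + p (μ 0 + j)) * (p h + p (μ 0 + k))))
            (uX S (μ 0) b j) (eY G h k)) from by rw [← mul_assoc, YX_commute, mul_assoc]]
      rw [ClaimI S G hd b h j k hbm hh hj hk, mul_smul_comm, XY_pull, mul_smul_comm, mul_smul_comm]
    · rw [mul_smul_comm, ← mul_assoc,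
        ClaimIII S G hd i b h k hi hbm hh hk, neg_mul, smul_neg, smul_mul_assoc, smul_smul,
        ← sgn_add, XY_mul_right, mul_assoc]
      congr 2
      have : ∀ b J H K : ZMod 2, (b + J) * (H + K) + (b * H + b * K + H * K)
          = H * J + J * K + H * K := by decide
      exact congrArg sgn (this _ _ _ _)
  rw [Finset.sum_congr rfl hterm, Finset.sum_add_distrib, ← Finset.mul_sum, ← Finset.mul_sum,
    Finset.sum_neg_distrib, ← sub_eq_add_neg]
  congr 1
  rw [← Finset.smul_sum]
  congr 1
  rw [← Finset.mul_sum, ← Finset.mul_sum, ← Finset.mul_sum, ← F3xinv S G h j hh hj]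


lemma EE2 (hd : off μ 2 = d) (i h j k : ℕ) (hi : i < μ 0) (hh : h < μ 0)
    (hj : j < μ 1) (hk : k < μ 1) :
    (Yv - Xv) * (∑ b ∈ Finset.range (μ 0),
        sgn (p b * p (μ 0 + j) + p b * p h + p (μ 0 + j) * p h) •
          (d'X G i b * (eY G h j * Lam S G b k)))
    = -(Xv * (Yv * ((eY G i j - eX G i j) * (eY G h k - eX G h k))))
      + sgn (p i * p h + p i * p (μ 0 + j) + p (μ 0 + j) * p h) •
          ((Yv - Xv) * (eY G h j * (eY G i k - eX G i k))) := by
  rw [Finset.mul_sum]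
  have hterm : ∀ b (_ : b ∈ Finset.range (μ 0)),
      (Yv - Xv) * (sgn (p b * p (μ 0 + j) + p b * p h + p (μ 0 + j) * p h) •
          (d'X G i b * (eY G h j * Lam S G b k)))
      = -(Xv * (Yv * ((eY G i j - eX G i j) * (d'X G h b * Lam S G b k))))
        + sgn (p i * p h + p i * p (μ 0 + j) + p (μ 0 + j) * p h) •
            ((Yv - Xv) * (eY G h j * (d'X G i b * Lam S G b k))) := by
    intro b hb
    have hbm := Finset.mem_range.1 hb
    have hrec : d'X G i b * eY G h j
        = scomm (sgn ((p i + p b) * (p h + p (μ 0 + j)))) (d'X G i b) (eY G h j)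
          + sgn ((p i + p b) * (p h + p (μ 0 + j))) • (eY G h j * d'X G i b) :=
      scomm_recover _ _ _ (sgn_mul_self _)
    rw [mul_smul_comm, ← mul_assoc (d'X G i b), hrec, add_mul, mul_add, smul_add]
    congr 1
    · -- claim III part
      rw [show (Yv - Xv) * (scomm (sgn ((p i + p b) * (p h + p (μ 0 + j))))
            (d'X G i b) (eY G h j) * Lam S G b k)
          = ((Yv - Xv) * scomm (sgn ((p i + p b) * (p h + p (μ 0 + j))))
            (d'X G i b) (eY G h j)) * Lam S G b k from by rw [mul_assoc]]
      rw [ClaimIII S G hd i b h j hi hbm hh hj, neg_mul, smul_neg, smul_mul_assoc, smul_smul,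
        ← sgn_add]
      have hzero : sgn (p b * p (μ 0 + j) + p b * p h + p (μ 0 + j) * p h
          + (p b * p h + p b * p (μ 0 + j) + p h * p (μ 0 + j))) = 1 := by
        have : ∀ b J H : ZMod 2, b * J + b * H + J * H + (b * H + b * J + H * J) = 0 := by decide
        rw [this, sgn_zero]
      rw [hzero, one_smul, XY_mul_right, mul_assoc]
    · rw [smul_mul_assoc, mul_smul_comm, smul_smul, ← sgn_add]
      have hsig : sgn (p b * p (μ 0 + j) + p b * p h + p (μ 0 + j) * p h
          + (p i + p b) * (p h + p (μ 0 + j)))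
          = sgn (p i * p h + p i * p (μ 0 + j) + p (μ 0 + j) * p h) := by
        have : ∀ b J H I : ZMod 2, b * J + b * H + J * H + (I + b) * (H + J)
            = I * H + I * J + J * H := by decide
        exact congrArg sgn (this _ _ _ _)
      rw [hsig]
      congr 1
      rw [mul_assoc]
  rw [Finset.sum_congr rfl hterm, Finset.sum_add_distrib]
  congr 1
  · rw [Finset.sum_neg_distrib]
    congr 1
    rw [← Finset.mul_sum, ← Finset.mul_sum, ← Finset.mul_sum, DelX S G h k hh hk]
  · rw [← Finset.smul_sum]
    congr 1
    rw [← Finset.mul_sum, ← Finset.mul_sum, DelX S G i k hi hk]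


lemma smul_XY (c : ℂ) (M : PowerSeries (PowerSeries A)) :
    c • (Xv * (Yv * M)) = Xv * (Yv * (c • M)) := by
  rw [mul_smul_comm, mul_smul_comm]

lemma XY_sub (P Q : PowerSeries (PowerSeries A)) :
    Xv * (Yv * P) - Xv * (Yv * Q) = Xv * (Yv * (P - Q)) := by
  rw [← mul_sub, ← mul_sub]

lemma XY_add (P Q : PowerSeries (PowerSeries A)) :
    Xv * (Yv * P) + Xv * (Yv * Q) = Xv * (Yv * (P + Q)) := by
  rw [← mul_add, ← mul_add]

/-- The master identity relating the defect of the `(j,k)` relation to the defect of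
the `(k,j)` relation and the same-variable commutator. -/
lemma A1 (hd : off μ 2 = d) (i h j k : ℕ) (hi : i < μ 0) (hh : h < μ 0)
    (hj : j < μ 1) (hk : k < μ 1) :
    (Yv - Xv) * ((Yv - Xv) * scomm (sgn ((p i + p (μ 0 + j)) * (p h + p (μ 0 + k))))
        (eX G i j) (eY G h k)
      - sgn (p h * p (μ 0 + j) + p (μ 0 + j) * p (μ 0 + k) + p h * p (μ 0 + k)) •
          (Xv * (Yv * ((eY G i k - eX G i k) * (eY G h j - eX G h j)))))
    = sgn (p i * p h + p i * p (μ 0 + j) + p (μ 0 + j) * p h) •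
        (Xv * (Yv * ((Yv - Xv) * scomm (sgn ((p i + p (μ 0 + k)) * (p h + p (μ 0 + j))))
          (eY G h j) (eY G i k))))
      + sgn (p h * p (μ 0 + j) + p (μ 0 + j) * p (μ 0 + k) + p h * p (μ 0 + k)) •
        (Xv * (Yv * ((Yv - Xv) * scomm (sgn ((p i + p (μ 0 + k)) * (p h + p (μ 0 + j))))
            (eX G i k) (eY G h j)
          - sgn (p h * p (μ 0 + k) + p (μ 0 + k) * p (μ 0 + j) + p h * p (μ 0 + j)) •
              (Xv * (Yv * ((eY G i j - eX G i j) * (eY G h k - eX G h k))))))) := by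
  have hEE := EE S G hd i h j k hi hh hj hk
  have hEE2 := EE2 S G hd i h j k hi hh hj hk
  have h1 : sgn (p i * p h + p i * p (μ 0 + j) + p (μ 0 + j) * p h)
      * sgn ((p i + p (μ 0 + k)) * (p h + p (μ 0 + j)))
      = sgn (p h * p (μ 0 + j) + p (μ 0 + j) * p (μ 0 + k) + p h * p (μ 0 + k)) := by
    rw [← sgn_add]
    have : ∀ I H J K : ZMod 2, I * H + I * J + J * H + (I + K) * (H + J)
        = H * J + J * K + H * K := by decide
    exact congrArg sgn (this _ _ _ _)
  have h2 : sgn (p h * p (μ 0 + j) + p (μ 0 + j) * p (μ 0 + k) + p h * p (μ 0 + k))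
      * sgn ((p i + p (μ 0 + k)) * (p h + p (μ 0 + j)))
      = sgn (p i * p h + p i * p (μ 0 + j) + p (μ 0 + j) * p h) := by
    rw [← sgn_add]
    have : ∀ I H J K : ZMod 2, H * J + J * K + H * K + (I + K) * (H + J)
        = I * H + I * J + J * H := by decide
    exact congrArg sgn (this _ _ _ _)
  have h3 : sgn (p h * p (μ 0 + j) + p (μ 0 + j) * p (μ 0 + k) + p h * p (μ 0 + k))
      * sgn (p h * p (μ 0 + k) + p (μ 0 + k) * p (μ 0 + j) + p h * p (μ 0 + j)) = 1 := by
    rw [← sgn_add]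
    have : ∀ H J K : ZMod 2, H * J + J * K + H * K + (H * K + K * J + H * J) = 0 := by decide
    rw [this, sgn_zero]
  rw [mul_sub, hEE, mul_sub, XY_pull, hEE2, mul_smul_comm, XY_pull, mul_smul_comm, XY_pull,
    smul_XY, smul_XY, smul_XY, smul_XY, XY_sub, XY_sub, XY_add]
  congr 2
  simp only [scomm, mul_sub, sub_mul, smul_sub, smul_add, mul_smul_comm, smul_smul,
    h1, h2, h3, one_smul]
  module


/-! ### The defect series and its coefficients -/

def GD (q : ℕ → ZMod 2) (i h j k : ℕ) : PowerSeries (PowerSeries A) :=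
  (Yv - Xv) * scomm (sgn ((q i + q (μ 0 + j)) * (q h + q (μ 0 + k)))) (eX G i j) (eY G h k)
  - sgn (q h * q (μ 0 + j) + q (μ 0 + j) * q (μ 0 + k) + q h * q (μ 0 + k)) •
      (Xv * (Yv * ((eY G i k - eX G i k) * (eY G h j - eX G h j))))

lemma A1' (hd : off μ 2 = d) (i h j k : ℕ) (hi : i < μ 0) (hh : h < μ 0)
    (hj : j < μ 1) (hk : k < μ 1) :
    (Yv - Xv) * GD S G p i h j k
    = sgn (p i * p h + p i * p (μ 0 + j) + p (μ 0 + j) * p h) •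
        (Xv * (Yv * ((Yv - Xv) * scomm (sgn ((p i + p (μ 0 + k)) * (p h + p (μ 0 + j))))
          (eY G h j) (eY G i k))))
      + sgn (p h * p (μ 0 + j) + p (μ 0 + j) * p (μ 0 + k) + p h * p (μ 0 + k)) •
        (Xv * (Yv * GD S G p i h k j)) := by
  unfold GD
  exact A1 S G hd i h j k hi hh hj hk

lemma cf_scomm_yy (ε : ℂ) (f g : ℕ → A) (r s : ℕ) :
    cf r s (scomm ε (sy f) (sy g))
    = if r = 0 then (∑ e ∈ Finset.range (s+1), f e * g (s - e))
        - ε • ∑ e ∈ Finset.range (s+1), g e * f (s - e) else 0 := by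
  rw [scomm, cf_sub, cf_smul, cf_sy_mul_sy, cf_sy_mul_sy]
  split_ifs <;> simp

lemma cf_GD_x0 (i h j k t : ℕ) : cf 0 t (GD S G p i h j k) = 0 := by
  unfold GD
  rw [cf_sub, cf_smul, sub_mul, cf_sub, cf_Xv_mul_zero, cf_Xv_mul_zero]
  rcases t with _ | t
  · rw [cf_Yv_mul_zero]
    simp
  · rw [cf_Yv_mul]
    simp only [eX, eY]
    rw [cf_scomm_xy, G.E_zero 0 1 i j (by norm_num), scomm_zero_left]
    simp

lemma cf_GD_y0 (i h j k n : ℕ) : cf n 0 (GD S G p i h j k) = 0 := by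
  unfold GD
  rw [cf_sub, cf_smul, sub_mul, cf_sub, cf_Yv_mul_zero]
  rcases n with _ | n
  · rw [cf_Xv_mul_zero, cf_Xv_mul_zero]
    simp
  · rw [cf_Xv_mul, cf_Xv_mul, cf_Yv_mul_zero]
    simp only [eX, eY]
    rw [cf_scomm_xy, G.E_zero 0 1 h k (by norm_num), scomm_zero_right]
    simp

/-- The bridge between coefficients of `GD` and the statement of the theorem. -/
lemma bridge (i h j k r s : ℕ) :
    cf (r+1) (s+1) (GD S G p i h j k)
    = (scomm (sgn ((p i + p (μ 0 + j)) * (p h + p (μ 0 + k))))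
          (G.E 0 1 i j (r + 1)) (G.E 0 1 h k s) -
        scomm (sgn ((p i + p (μ 0 + j)) * (p h + p (μ 0 + k))))
          (G.E 0 1 i j r) (G.E 0 1 h k (s + 1)))
      - sgn (p h * p (μ 0 + j) + p (μ 0 + j) * p (μ 0 + k) + p h * p (μ 0 + k)) •
        ((if s = 0 then
            ∑ e ∈ Finset.range (r + 1), G.E 0 1 i k e * G.E 0 1 h j (r - e)
          else 0) -
         G.E 0 1 i k r * G.E 0 1 h j s - G.E 0 1 i k s * G.E 0 1 h j r +
         (if r = 0 then
            ∑ e ∈ Finset.range (s + 1), G.E 0 1 i k e * G.E 0 1 h j (s - e)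
          else 0)) := by
  unfold GD
  rw [cf_sub, cf_smul, sub_mul, cf_sub, cf_Yv_mul, cf_Xv_mul]
  simp only [eX, eY]
  rw [cf_scomm_xy, cf_scomm_xy]
  congr 1
  congr 1
  rw [cf_Xv_mul, cf_Yv_mul]
  simp only [mul_sub, sub_mul, cf_sub, cf_sy_mul_sy, cf_sy_mul_sx, cf_sx_mul_sy, cf_sx_mul_sx]
  abel

/-- extraction of `A1'` at bidegree `(n+1, t+1)`. -/
lemma EXT (hd : off μ 2 = d) (i h j k : ℕ) (hi : i < μ 0) (hh : h < μ 0)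
    (hj : j < μ 1) (hk : k < μ 1) (n t : ℕ) :
    cf (n+1) t (GD S G p i h j k) - cf n (t+1) (GD S G p i h j k)
    = sgn (p i * p h + p i * p (μ 0 + j) + p (μ 0 + j) * p h) •
        cf n t ((Yv - Xv) * scomm (sgn ((p i + p (μ 0 + k)) * (p h + p (μ 0 + j))))
          (eY G h j) (eY G i k))
      + sgn (p h * p (μ 0 + j) + p (μ 0 + j) * p (μ 0 + k) + p h * p (μ 0 + k)) •
        cf n t (GD S G p i h k j) := by
  have h0 := congrArg (cf (n+1) (t+1)) (A1' S G hd i h j k hi hh hj hk)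
  rw [cf_add, cf_smul, cf_smul, cf_Xv_mul, cf_Yv_mul, cf_Xv_mul, cf_Yv_mul] at h0
  rw [← h0, sub_mul, cf_sub, cf_Yv_mul, cf_Xv_mul]

/-- the `V`-part has zero coefficients away from `x^0`. -/
lemma cf_V_x (i h j k : ℕ) (a b : ℕ) (ha : a ≠ 0) :
    cf a b (scomm (sgn ((p i + p (μ 0 + k)) * (p h + p (μ 0 + j)))) (eY G h j) (eY G i k))
      = 0 := by
  simp only [eY]
  rw [cf_scomm_yy, if_neg ha]


/-! ### The main induction -/

lemma main (hd : off μ 2 = d) : ∀ N : ℕ, ∀ i h j k : ℕ, i < μ 0 → h < μ 0 → j < μ 1 →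
    k < μ 1 → ∀ r s : ℕ, r + s = N → cf (r+1) (s+1) (GD S G p i h j k) = 0 := by
  intro N
  induction N using Nat.strong_induction_on with
  | _ N IH =>
  intro i h j k hi hh hj hk r s hrs
  -- V-coefficients vanish up to degree N
  have hV : ∀ m', m' ≤ N →
      cf 0 m' (scomm (sgn ((p i + p (μ 0 + k)) * (p h + p (μ 0 + j))))
        (eY G h j) (eY G i k)) = 0 := by
    intro m' hm'
    have hε3sq : sgn ((p i + p (μ 0 + k)) * (p h + p (μ 0 + j)))
        * sgn ((p i + p (μ 0 + k)) * (p h + p (μ 0 + j))) = 1 := sgn_mul_self _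
    have hsum0 : ∑ e ∈ Finset.range (m'+1),
        scomm (sgn ((p i + p (μ 0 + k)) * (p h + p (μ 0 + j))))
          (G.E 0 1 i k e) (G.E 0 1 h j (m' - e)) = 0 := by
      apply sumCC_zero m'
        (fun a b => scomm (sgn ((p i + p (μ 0 + k)) * (p h + p (μ 0 + j))))
          (G.E 0 1 i k a) (G.E 0 1 h j b))
        (fun a b =>
          sgn (p h * p (μ 0 + k) + p (μ 0 + k) * p (μ 0 + j) + p h * p (μ 0 + j)) •
            ((if b = 0 then ∑ e ∈ Finset.range (a+1), G.E 0 1 i j e * G.E 0 1 h k (a-e) else 0)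
              - G.E 0 1 i j a * G.E 0 1 h k b - G.E 0 1 i j b * G.E 0 1 h k a
              + (if a = 0 then ∑ e ∈ Finset.range (b+1), G.E 0 1 i j e * G.E 0 1 h k (b-e)
                  else 0)))
      · intro s'
        rw [G.E_zero 0 1 i k (by norm_num), scomm_zero_left]
      · rw [G.E_zero 0 1 h j (by norm_num), scomm_zero_right]
      · intro a b
        congr 1
        abel
      · intro a b hab
        have hIH := IH (a + b) (by omega) i h k j hi hh hk hj a b rfl
        rw [bridge] at hIH
        rw [sub_sub, sub_eq_zero] at hIH
        exact hIH
    simp only [eY]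
    rw [cf_scomm_yy, if_pos rfl]
    have hexp : ∑ e ∈ Finset.range (m'+1),
        scomm (sgn ((p i + p (μ 0 + k)) * (p h + p (μ 0 + j))))
          (G.E 0 1 i k e) (G.E 0 1 h j (m' - e))
        = (∑ e ∈ Finset.range (m'+1), G.E 0 1 i k e * G.E 0 1 h j (m' - e))
          - sgn ((p i + p (μ 0 + k)) * (p h + p (μ 0 + j))) •
            ∑ e ∈ Finset.range (m'+1), G.E 0 1 h j e * G.E 0 1 i k (m' - e) := by
      simp only [scomm]
      rw [Finset.sum_sub_distrib]
      congr 1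
      rw [← Finset.smul_sum]
      congr 1
      rw [← Finset.sum_range_reflect (fun e => G.E 0 1 h j e * G.E 0 1 i k (m' - e)) (m'+1)]
      apply Finset.sum_congr rfl
      intro e he
      have hem := Finset.mem_range.1 he
      rw [show m' + 1 - 1 - e = m' - e by omega, show m' - (m' - e) = e by omega]
    rw [hexp] at hsum0
    have h5 : (∑ e ∈ Finset.range (m'+1), G.E 0 1 i k e * G.E 0 1 h j (m' - e))
        = sgn ((p i + p (μ 0 + k)) * (p h + p (μ 0 + j))) •
            ∑ e ∈ Finset.range (m'+1), G.E 0 1 h j e * G.E 0 1 i k (m' - e) :=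
      sub_eq_zero.mp hsum0
    rw [h5, smul_smul, hε3sq, one_smul, sub_self]
  -- the inner descent at level N
  have hdesc : ∀ n t : ℕ, n + t = N + 2 → cf n t (GD S G p i h j k) = 0 := by
    intro n
    induction n with
    | zero => intro t _; exact cf_GD_x0 S G i h j k t
    | succ n ihn =>
      intro t hnt
      rcases t with _ | t2
      · exact cf_GD_y0 S G i h j k (n+1)
      have hext := EXT S G hd i h j k hi hh hj hk n (t2+1)
      have hkj : cf n (t2+1) (GD S G p i h k j) = 0 := by
        rcases n with _ | n2
        · exact cf_GD_x0 S G i h k j (t2+1)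
        · exact IH (n2 + t2) (by omega) i h k j hi hh hk hj n2 t2 rfl
      have hVpart : cf n (t2+1) ((Yv - Xv) *
          scomm (sgn ((p i + p (μ 0 + k)) * (p h + p (μ 0 + j))))
            (eY G h j) (eY G i k)) = 0 := by
        rw [sub_mul, cf_sub, cf_Yv_mul]
        rcases n with _ | n2
        · rw [cf_Xv_mul_zero, hV t2 (by omega), sub_zero]
        · rw [cf_Xv_mul, cf_V_x S G i h j k (n2+1) t2 (Nat.succ_ne_zero _)]
          rcases n2 with _ | n3
          · rw [hV (t2+1) (by omega), zero_sub, neg_zero]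
          · rw [cf_V_x S G i h j k (n3+1) (t2+1) (Nat.succ_ne_zero _), zero_sub, neg_zero]
      rw [hVpart, smul_zero, hkj, smul_zero, add_zero] at hext
      have h6 := ihn (t2+1+1) (by omega)
      rw [h6, sub_zero] at hext
      exact hext
  exact hdesc (r+1) (s+1) (by omega)


end main

/-- For `μ = (μ 0, μ 1)`, the E-block entries satisfy
`(u-v)[E_{1;i,j}(u), E_{1;h,k}(v)] = (-1)^{|h|₁|j|₂+|j|₂|k|₂+|h|₁|k|₂}
(E_{1;i,k}(u) - E_{1;i,k}(v))(E_{1;h,j}(u) - E_{1;h,j}(v))`, stated as the equality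
of the coefficients of `u^{-r} v^{-s}` for all `r, s ≥ 0`. -/
theorem statement8 [Ring A] [Algebra ℂ A] {d : ℕ} {p : ℕ → ZMod 2} {μ : ℕ → ℕ}
    (S : RTT A d p) (G : Gauss S.t 2 μ) (hd : off μ 2 = d) :
    ∀ i j h k r s : ℕ, i < μ 0 → j < μ 1 → h < μ 0 → k < μ 1 →
      scomm (sgn ((p i + p (μ 0 + j)) * (p h + p (μ 0 + k))))
          (G.E 0 1 i j (r + 1)) (G.E 0 1 h k s) -
        scomm (sgn ((p i + p (μ 0 + j)) * (p h + p (μ 0 + k))))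
          (G.E 0 1 i j r) (G.E 0 1 h k (s + 1)) =
      sgn (p h * p (μ 0 + j) + p (μ 0 + j) * p (μ 0 + k) + p h * p (μ 0 + k)) •
        ((if s = 0 then
            ∑ e ∈ Finset.range (r + 1), G.E 0 1 i k e * G.E 0 1 h j (r - e)
          else 0) -
         G.E 0 1 i k r * G.E 0 1 h j s - G.E 0 1 i k s * G.E 0 1 h j r +
         (if r = 0 then
            ∑ e ∈ Finset.range (s + 1), G.E 0 1 i k e * G.E 0 1 h j (s - e)
          else 0)) := by
  intro i j h k r s hi hj hh hk
  have h0 := main S G hd (r + s) i h j k hi hh hj hk r s rfl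
  rw [bridge] at h0
  exact sub_eq_zero.mp h0

end SuperYangian
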